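/- arXiv:1707.09721 — 6 statements merged into one kernel-verified Lean document; each statement's English description precedes it below -/
import Mathlib

section
/- For all n ≥ 0, Ch_{n,λ}(x) = Σ_{k=0}^{n} Σ_{m=0}^{k} C(n,k) · (x)_{m,λ} · S₁(k,m) · Ch_{n-k,λ}, where Ch_{n,λ} = Ch_{n,λ}(0). -/
open Finset PowerSeries

/-- The degenerate falling factorial `(x)_{n,λ}`. -/
noncomputable def df (l x : ℚ) (n : ℕ) : ℚ := ∏ i ∈ Finset.range n, (x - (i : ℚ) * l)

/-- The formal power series `(1+λt)^{x/λ} := Σ (x)_{n,λ} tⁿ/n!`. -/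
noncomputable def B (l x : ℚ) : PowerSeries ℚ :=
  PowerSeries.mk fun n => df l x n / n.factorial

/-- Signed Stirling numbers of the first kind. -/
def S1 : ℕ → ℕ → ℚ
  | 0, 0 => 1
  | 0, _ + 1 => 0
  | _ + 1, 0 => 0
  | n + 1, k + 1 => S1 n k - (n : ℚ) * S1 n (k + 1)

/-- Stirling numbers of the second kind. -/
def S2 : ℕ → ℕ → ℚ
  | 0, 0 => 1
  | 0, _ + 1 => 0
  | _ + 1, 0 => 0
  | n + 1, k + 1 => ((k : ℚ) + 1) * S2 n (k + 1) + S2 n k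

/-- Degenerate Changhee polynomials of the second kind, built from a family `E`
(intended: Carlitz degenerate Euler polynomials): `Ch_{n,λ}(x) = Σ_{l≤n} S₁(n,l) E_{l,λ}(x)`. -/
noncomputable def Ch (E : ℕ → ℚ → ℚ) (n : ℕ) (x : ℚ) : ℚ :=
  ∑ m ∈ Finset.range (n + 1), S1 n m * E m x


section Aux

lemma S1_zero_succ (k : ℕ) : S1 0 (k+1) = 0 := rfl
lemma S1_succ_zero (n : ℕ) : S1 (n+1) 0 = 0 := rfl
lemma S1_succ_succ (n k : ℕ) : S1 (n+1) (k+1) = S1 n k - (n : ℚ) * S1 n (k+1) := rfl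

lemma S1_eq_zero : ∀ n k : ℕ, n < k → S1 n k = 0 := by
  intro n
  induction n with
  | zero => intro k h; match k, h with | k+1, _ => rfl
  | succ n ih =>
    intro k h
    match k, h with
    | k+1, h =>
      rw [S1_succ_succ, ih k (by omega), ih (k+1) (by omega)]
      ring

lemma conv_succ (a b : ℕ → ℚ) (n : ℕ) :
    ∑ k ∈ range (n+2), ((n+1).choose k : ℚ) * a k * b (n+1-k)
    = (∑ k ∈ range (n+1), (n.choose k : ℚ) * a (k+1) * b (n-k))
      + ∑ k ∈ range (n+1), (n.choose k : ℚ) * a k * b (n+1-k) := by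
  have h1 : ∑ k ∈ range (n+2), ((n+1).choose k : ℚ) * a k * b (n+1-k)
      = a 0 * b (n+1) + ∑ k ∈ range (n+1), ((n+1).choose (k+1) : ℚ) * a (k+1) * b (n-k) := by
    rw [Finset.sum_range_succ' (fun k => ((n+1).choose k : ℚ) * a k * b (n+1-k)) (n+1)]
    simp [add_comm]
  have h2 : ∑ k ∈ range (n+2), (n.choose k : ℚ) * a k * b (n+1-k)
      = a 0 * b (n+1) + ∑ k ∈ range (n+1), (n.choose (k+1) : ℚ) * a (k+1) * b (n-k) := by
    rw [Finset.sum_range_succ' (fun k => (n.choose k : ℚ) * a k * b (n+1-k)) (n+1)]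
    simp [add_comm]
  have h3 : ∑ k ∈ range (n+2), (n.choose k : ℚ) * a k * b (n+1-k)
      = ∑ k ∈ range (n+1), (n.choose k : ℚ) * a k * b (n+1-k) := by
    rw [Finset.sum_range_succ]
    simp [Nat.choose_succ_self]
  rw [h1, ← h3, h2]
  have : ∀ k ∈ range (n+1), ((n+1).choose (k+1) : ℚ) * a (k+1) * b (n-k)
      = (n.choose k : ℚ) * a (k+1) * b (n-k) + (n.choose (k+1) : ℚ) * a (k+1) * b (n-k) := by
    intro k _
    rw [Nat.choose_succ_succ]
    push_cast
    ring
  rw [Finset.sum_congr rfl this, Finset.sum_add_distrib]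
  ring

lemma vdm (n : ℕ) : ∀ j q : ℕ, ((j+q).choose j : ℚ) * S1 n (j+q)
    = ∑ k ∈ range (n+1), (n.choose k : ℚ) * S1 k j * S1 (n-k) q := by
  induction n with
  | zero =>
    intro j q
    simp only [range_one, sum_singleton, Nat.choose_zero_right, Nat.cast_one, one_mul,
      Nat.zero_sub]
    match j, q with
    | 0, 0 => norm_num [S1]
    | j+1, q => simp [S1_zero_succ, S1_eq_zero 0 (j+1+q) (by omega)]
    | 0, q+1 => simp [S1_zero_succ]
  | succ n ih =>
    intro j q
    have hcs := conv_succ (fun k => S1 k j) (fun k => S1 k q) n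
    rw [show n+1+1 = n+2 by rfl, hcs]
    have hsub : ∀ k ∈ range (n+1), n+1-k = (n-k)+1 := by intro k hk; rw [mem_range] at hk; omega
    match j, q with
    | 0, 0 =>
      have e1 : ∀ k ∈ range (n+1), (n.choose k : ℚ) * S1 (k+1) 0 * S1 (n-k) 0 = 0 := by
        intro k _; rw [S1_succ_zero]; ring
      have e2 : ∀ k ∈ range (n+1), (n.choose k : ℚ) * S1 k 0 * S1 (n+1-k) 0 = 0 := by
        intro k hk; rw [hsub k hk, S1_succ_zero]; ring
      rw [sum_congr rfl e1, sum_congr rfl e2, S1_succ_zero]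
      simp
    | 0, q+1 =>
      have e1 : ∀ k ∈ range (n+1), (n.choose k : ℚ) * S1 (k+1) 0 * S1 (n-k) (q+1) = 0 := by
        intro k _; rw [S1_succ_zero]; ring
      have e2 : ∀ k ∈ range (n+1), (n.choose k : ℚ) * S1 k 0 * S1 (n+1-k) (q+1)
          = (n.choose k : ℚ) * S1 k 0 * S1 (n-k) q
            - ((n-k : ℕ) : ℚ) * ((n.choose k : ℚ) * S1 k 0 * S1 (n-k) (q+1)) := by
        intro k hk; rw [hsub k hk, S1_succ_succ]; ring
      rw [sum_congr rfl e1, sum_congr rfl e2, sum_sub_distrib]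
      have e3 : ∑ k ∈ range (n+1), ((n-k : ℕ) : ℚ) * ((n.choose k : ℚ) * S1 k 0 * S1 (n-k) (q+1))
          = (n : ℚ) * S1 n (q+1) := by
        rw [Finset.sum_eq_single 0]
        · simp [S1]
        · intro k hk hk0
          match k, hk0 with
          | k+1, _ => rw [S1_succ_zero]; ring
        · simp
      rw [e3, ← ih 0 q]
      simp [S1_succ_succ]
    | j+1, 0 =>
      have e2 : ∀ k ∈ range (n+1), (n.choose k : ℚ) * S1 k (j+1) * S1 (n+1-k) 0 = 0 := by
        intro k hk; rw [hsub k hk, S1_succ_zero]; ring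
      have e1 : ∀ k ∈ range (n+1), (n.choose k : ℚ) * S1 (k+1) (j+1) * S1 (n-k) 0
          = (n.choose k : ℚ) * S1 k j * S1 (n-k) 0
            - (k : ℚ) * ((n.choose k : ℚ) * S1 k (j+1) * S1 (n-k) 0) := by
        intro k _; rw [S1_succ_succ]; ring
      rw [sum_congr rfl e1, sum_congr rfl e2, sum_sub_distrib]
      have e3 : ∑ k ∈ range (n+1), (k : ℚ) * ((n.choose k : ℚ) * S1 k (j+1) * S1 (n-k) 0)
          = (n : ℚ) * S1 n (j+1) := by
        rw [Finset.sum_eq_single n]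
        · simp [S1]
        · intro k hk hkn
          rw [mem_range] at hk
          have : n - k = (n-k-1)+1 := by omega
          rw [this, S1_succ_zero]; ring
        · simp
      rw [e3, ← ih j 0]
      simp [S1_succ_succ]
    | j+1, q+1 =>
      have e1 : ∀ k ∈ range (n+1), (n.choose k : ℚ) * S1 (k+1) (j+1) * S1 (n-k) (q+1)
          = (n.choose k : ℚ) * S1 k j * S1 (n-k) (q+1)
            - (k : ℚ) * ((n.choose k : ℚ) * S1 k (j+1) * S1 (n-k) (q+1)) := by
        intro k _; rw [S1_succ_succ]; ring
      have e2 : ∀ k ∈ range (n+1), (n.choose k : ℚ) * S1 k (j+1) * S1 (n+1-k) (q+1)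
          = (n.choose k : ℚ) * S1 k (j+1) * S1 (n-k) q
            - ((n-k : ℕ) : ℚ) * ((n.choose k : ℚ) * S1 k (j+1) * S1 (n-k) (q+1)) := by
        intro k hk; rw [hsub k hk, S1_succ_succ]; ring
      rw [sum_congr rfl e1, sum_congr rfl e2, sum_sub_distrib, sum_sub_distrib]
      have e3 : (∑ k ∈ range (n+1), (k : ℚ) * ((n.choose k : ℚ) * S1 k (j+1) * S1 (n-k) (q+1)))
          + ∑ k ∈ range (n+1), ((n-k : ℕ) : ℚ) * ((n.choose k : ℚ) * S1 k (j+1) * S1 (n-k) (q+1))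
          = (n : ℚ) * ∑ k ∈ range (n+1), (n.choose k : ℚ) * S1 k (j+1) * S1 (n-k) (q+1) := by
        rw [← sum_add_distrib, mul_sum]
        refine sum_congr rfl (fun k hk => ?_)
        rw [mem_range] at hk
        have : ((n-k : ℕ) : ℚ) = (n : ℚ) - (k : ℚ) := by
          push_cast [Nat.cast_sub (by omega : k ≤ n)]; ring
        rw [this]; ring
      have goal2 : ((j+1+(q+1)).choose (j+1) : ℚ) * S1 (n+1) (j+1+(q+1))
          = (((j+(q+1)).choose j : ℚ) * S1 n (j+(q+1))
            + ((j+1+q).choose (j+1) : ℚ) * S1 n (j+1+q))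
            - (n : ℚ) * (((j+1+(q+1)).choose (j+1) : ℚ) * S1 n (j+1+(q+1))) := by
        have hadd : j+1+(q+1) = (j + (q+1)) + 1 := by ring
        rw [hadd, S1_succ_succ]
        have hp : (((j+(q+1)+1).choose (j+1) : ℕ) : ℚ)
            = ((j+(q+1)).choose j : ℚ) + ((j+(q+1)).choose (j+1) : ℚ) := by
          rw [← Nat.cast_add, ← Nat.choose_succ_succ]
        rw [hp]
        have h3 : j + (q+1) = j+1+q := by ring
        rw [h3]
        ring
      rw [goal2, ih j (q+1), ih (j+1) q, ih (j+1) (q+1)]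
      rw [← e3]
      ring

lemma B_zero (l : ℚ) : B l 0 = 1 := by
  ext n
  cases n with
  | zero => simp [B, df]
  | succ n =>
    rw [B, PowerSeries.coeff_mk, PowerSeries.coeff_one]
    have : df l 0 (n+1) = 0 := by
      apply Finset.prod_eq_zero (Finset.mem_range.2 (Nat.succ_pos n))
      simp
    simp [this]

lemma B_one_ne (l : ℚ) : B l 1 + 1 ≠ 0 := by
  intro h
  have := congrArg (PowerSeries.constantCoeff) h
  rw [map_add, map_one, map_zero] at this
  have h2 : PowerSeries.constantCoeff (B l 1) = 1 := by
    rw [B, ← PowerSeries.coeff_zero_eq_constantCoeff, PowerSeries.coeff_mk]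
    simp [df]
  rw [h2] at this
  norm_num at this

lemma E_eq (l : ℚ) (E : ℕ → ℚ → ℚ)
    (hE : ∀ x : ℚ, (PowerSeries.mk fun n => E n x / n.factorial) * (B l 1 + 1)
      = 2 * B l x) (n : ℕ) (x : ℚ) :
    E n x = ∑ j ∈ range (n+1), (n.choose j : ℚ) * df l x j * E (n-j) 0 := by
  have key : (PowerSeries.mk fun n => E n x / n.factorial)
      = B l x * (PowerSeries.mk fun n => E n 0 / n.factorial) := by
    apply mul_right_cancel₀ (B_one_ne l)
    rw [hE x, mul_assoc, hE 0, B_zero, mul_one]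
    ring
  have hc := congrArg (PowerSeries.coeff n) key
  rw [PowerSeries.coeff_mk, PowerSeries.coeff_mul,
    Finset.Nat.sum_antidiagonal_eq_sum_range_succ_mk] at hc
  simp only [PowerSeries.coeff_mk, B, PowerSeries.coeff_mk] at hc
  have hn : E n x = (n.factorial : ℚ) * (E n x / n.factorial) := by
    field_simp
  rw [hn, hc, Finset.mul_sum]
  refine Finset.sum_congr rfl (fun k hk => ?_)
  rw [mem_range] at hk
  rw [Nat.cast_choose ℚ (by omega : k ≤ n)]
  have h1 : (k.factorial : ℚ) ≠ 0 := Nat.cast_ne_zero.2 (Nat.factorial_ne_zero k)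
  have h2 : ((n-k).factorial : ℚ) ≠ 0 := Nat.cast_ne_zero.2 (Nat.factorial_ne_zero _)
  field_simp

lemma tri_sum (g : ℕ → ℕ → ℚ) : ∀ n : ℕ,
    ∑ s ∈ range (n+1), ∑ m ∈ range (s+1), g m (s-m)
    = ∑ m ∈ range (n+1), ∑ p ∈ range (n+1-m), g m p := by
  intro n
  induction n with
  | zero => simp
  | succ n ih =>
    rw [sum_range_succ, ih,
      sum_range_succ (fun m => ∑ p ∈ range (n+1+1-m), g m p) (n+1)]
    have h1 : ∀ m ∈ range (n+1), ∑ p ∈ range (n+1+1-m), g m p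
        = (∑ p ∈ range (n+1-m), g m p) + g m (n+1-m) := by
      intro m hm; rw [mem_range] at hm
      rw [show n+1+1-m = (n+1-m)+1 by omega, sum_range_succ]
    rw [sum_congr rfl h1, sum_add_distrib,
      sum_range_succ (fun m => g m (n+1-m)) (n+1)]
    simp [Nat.sub_self]
    ring

end Aux

/-- `Ch_{n,λ}(x) = Σ_{k≤n} Σ_{m≤k} C(n,k) (x)_{m,λ} S₁(k,m) Ch_{n-k,λ}`. -/
theorem stmt3 (l : ℚ) (E : ℕ → ℚ → ℚ)
    (hE : ∀ x : ℚ, (PowerSeries.mk fun n => E n x / n.factorial) * (B l 1 + 1)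
      = 2 * B l x) :
    ∀ (n : ℕ) (x : ℚ), Ch E n x =
      ∑ k ∈ Finset.range (n + 1), ∑ m ∈ Finset.range (k + 1),
        (n.choose k : ℚ) * df l x m * S1 k m * Ch E (n - k) 0 := by
  intro n x
  set g : ℕ → ℕ → ℚ :=
    fun m p => S1 n (m+p) * ((m+p).choose m : ℚ) * df l x m * E p 0 with hg
  have hL : Ch E n x = ∑ m ∈ range (n+1), ∑ p ∈ range (n+1), g m p := by
    rw [Ch]
    have step1 : ∀ s ∈ range (n+1), S1 n s * E s x = ∑ m ∈ range (s+1), g m (s-m) := by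
      intro s hs
      rw [E_eq l E hE s x, Finset.mul_sum]
      refine sum_congr rfl (fun m hm => ?_)
      rw [mem_range] at hm
      have hms : m + (s - m) = s := by omega
      simp only [hg, hms]
      ring
    rw [sum_congr rfl step1, tri_sum]
    refine sum_congr rfl (fun m hm => ?_)
    rw [mem_range] at hm
    apply Finset.sum_subset
    · intro p hp; rw [mem_range] at *; omega
    · intro p hp hnp
      rw [mem_range] at hp hnp
      simp only [hg]
      rw [S1_eq_zero n (m+p) (by omega)]
      ring
  have hR : ∀ k ∈ range (n+1), (∑ m ∈ range (k+1),
      (n.choose k : ℚ) * df l x m * S1 k m * Ch E (n-k) 0)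
      = ∑ m ∈ range (n+1), ∑ p ∈ range (n+1),
        (n.choose k : ℚ) * df l x m * S1 k m * (S1 (n-k) p * E p 0) := by
    intro k hk
    rw [mem_range] at hk
    have hCh : Ch E (n-k) 0 = ∑ p ∈ range (n+1), S1 (n-k) p * E p 0 := by
      rw [Ch]
      apply Finset.sum_subset
      · intro p hp; rw [mem_range] at *; omega
      · intro p hp hnp
        rw [mem_range] at hp hnp
        rw [S1_eq_zero (n-k) p (by omega)]
        ring
    have hext : (∑ m ∈ range (k+1),
        (n.choose k : ℚ) * df l x m * S1 k m * Ch E (n-k) 0)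
        = ∑ m ∈ range (n+1), (n.choose k : ℚ) * df l x m * S1 k m * Ch E (n-k) 0 := by
      apply Finset.sum_subset
      · intro m hm; rw [mem_range] at *; omega
      · intro m hm hnm
        rw [mem_range] at hm hnm
        rw [S1_eq_zero k m (by omega)]
        ring
    rw [hext]
    refine sum_congr rfl (fun m hm => ?_)
    rw [hCh, Finset.mul_sum]
  rw [hL, sum_congr rfl hR]
  conv_rhs => rw [Finset.sum_comm]
  refine sum_congr rfl (fun m hm => ?_)
  conv_rhs => rw [Finset.sum_comm]
  refine sum_congr rfl (fun p hp => ?_)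
  have hv := vdm n m p
  calc g m p = (df l x m * E p 0) * (((m+p).choose m : ℚ) * S1 n (m+p)) := by
        simp only [hg]; ring
    _ = (df l x m * E p 0)
        * ∑ k ∈ range (n+1), (n.choose k : ℚ) * S1 k m * S1 (n-k) p := by rw [hv]
    _ = _ := by
        rw [Finset.mul_sum]
        refine sum_congr rfl (fun k hk => ?_)
        ring
end

section
/- For the degenerate Changhee polynomials of the second kind, Ch_{n,λ}(1) + Ch_{n,λ}(0) equals 2 if n = 0 and equals 0 for all n ≥ 1. -/
open Finset PowerSeries

/-- `Ch_{n,λ}(1) + Ch_{n,λ}(0) = 2` if `n = 0` and `0` if `n ≥ 1`. -/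
theorem stmt4 (l : ℚ) (E : ℕ → ℚ → ℚ)
    (hE : ∀ x : ℚ, (PowerSeries.mk fun n => E n x / n.factorial) * (B l 1 + 1)
      = 2 * B l x) :
    ∀ n : ℕ, Ch E n 1 + Ch E n 0 = if n = 0 then 2 else 0 := by
  have hg : (B l 1 + 1 : PowerSeries ℚ) ≠ 0 := by
    intro h
    have := congrArg (PowerSeries.coeff (R := ℚ) 0) h
    simp [B, df] at this
  have hsum : (PowerSeries.mk fun n => (E n 1 + E n 0) / n.factorial)
      * (B l 1 + 1) = 2 * (B l 1 + 1) := by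
    have h1 := hE 1
    have h0 := hE 0
    rw [B_zero] at h0
    have : ((PowerSeries.mk fun n => E n 1 / n.factorial)
        + (PowerSeries.mk fun n => E n 0 / n.factorial)) * (B l 1 + 1)
        = 2 * (B l 1 + 1) := by
      rw [add_mul, h1, h0]; ring
    rw [← this]
    congr 1
    ext n
    simp [add_div]
  have hf : (PowerSeries.mk fun n => (E n 1 + E n 0) / n.factorial)
      = (2 : PowerSeries ℚ) := mul_right_cancel₀ hg hsum
  have hEsum : ∀ n : ℕ, E n 1 + E n 0 = if n = 0 then 2 else 0 := by
    intro n
    have := congrArg (PowerSeries.coeff (R := ℚ) n) hf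
    have h2 : (2 : PowerSeries ℚ) = PowerSeries.C (R := ℚ) 2 := by
      simp [map_ofNat]
    rw [h2, PowerSeries.coeff_mk, PowerSeries.coeff_C] at this
    have hfac : (n.factorial : ℚ) ≠ 0 := Nat.cast_ne_zero.mpr n.factorial_ne_zero
    field_simp at this
    rcases Nat.eq_zero_or_pos n with h | h
    · subst h; simpa using this
    · rw [if_neg h.ne'] at this ⊢
      simpa [hfac] using this
  intro n
  have : Ch E n 1 + Ch E n 0
      = ∑ m ∈ Finset.range (n + 1), S1 n m * (E m 1 + E m 0) := by
    simp [Ch, ← Finset.sum_add_distrib, mul_add]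
  rw [this]
  have : ∀ m ∈ Finset.range (n + 1), S1 n m * (E m 1 + E m 0)
      = if m = 0 then S1 n 0 * 2 else 0 := by
    intro m _
    rw [hEsum m]
    split <;> simp_all
  rw [Finset.sum_congr rfl this, Finset.sum_ite_eq' _ 0]
  simp only [Finset.mem_range, Nat.succ_pos, if_true, Nat.lt_add_left_iff_pos]
  cases n with
  | zero => simp [S1]
  | succ k => simp [S1]
end

section
/- Let d be an odd positive integer. For all n ≥ 0, Ch_{n,λ} = Σ_{m=0}^{n} d^m · (Σ_{a=0}^{d-1} (-1)^a · E_{m,λ/d}(a/d)) · S₁(n,m), where Ch_{n,λ} are the degenerate Changhee numbers of the second kind and E_{m,μ}(x) are Carlitz's degenerate Euler polynomials with parameter μ = λ/d. -/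
open Finset PowerSeries

lemma df_succ (l x : ℚ) (n : ℕ) : df l x (n+1) = df l x n * (x - n*l) := by
  simp [df, Finset.prod_range_succ]

lemma df_add (l x y : ℚ) (n : ℕ) :
    df l (x+y) n = ∑ k ∈ range (n+1), (n.choose k : ℚ) * df l x k * df l y (n-k) := by
  induction n with
  | zero => simp [df]
  | succ n ih =>
    have hL : df l (x+y) (n+1)
        = ∑ k ∈ range (n+1), ((n.choose k : ℚ) * df l x k * df l y (n-k)) * (x + y - n*l) := by
      rw [df_succ, ih, Finset.sum_mul]
    rw [hL]
    have key : ∀ k ∈ range (n+1), ((n.choose k : ℚ) * df l x k * df l y (n-k)) * (x+y-n*l)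
        = (n.choose k : ℚ) * df l x (k+1) * df l y (n-k)
          + (n.choose k : ℚ) * df l x k * df l y ((n-k)+1) := by
      intro k hk
      have hk' : k ≤ n := Nat.lt_succ_iff.mp (mem_range.mp hk)
      rw [df_succ, df_succ]
      have h3 : ((n-k : ℕ) : ℚ) = (n : ℚ) - k := by
        rw [Nat.cast_sub hk']
      rw [h3]; ring
    rw [Finset.sum_congr rfl key, Finset.sum_add_distrib]
    -- RHS manipulation
    rw [Finset.sum_range_succ' (fun k => ((n+1).choose k : ℚ) * df l x k * df l y (n+1-k)) (n+1)]
    have hps : ∀ k ∈ range (n+1), (((n+1).choose (k+1) : ℚ)) * df l x (k+1) * df l y (n+1-(k+1))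
        = (n.choose k : ℚ) * df l x (k+1) * df l y (n-k)
          + (n.choose (k+1) : ℚ) * df l x (k+1) * df l y (n-k) := by
      intro k hk
      have : (n+1).choose (k+1) = n.choose k + n.choose (k+1) := Nat.choose_succ_succ n k
      rw [this, Nat.succ_sub_succ]
      push_cast; ring
    rw [Finset.sum_congr rfl hps, Finset.sum_add_distrib, add_assoc]
    congr 1
    -- remaining: ∑ k ≤ n, C(n,k) f k g (n-k+1) = ∑ k ≤ n, C(n,k+1) f (k+1) g (n-k) + C(n+1,0) f 0 g (n+1)
    have h0 : ((n+1).choose 0 : ℚ) * df l x 0 * df l y (n+1-0)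
        = (n.choose 0 : ℚ) * df l x 0 * df l y ((n-0)+1) := by simp
    rw [h0]
    have hre : ∀ k ∈ range (n+1), (n.choose (k+1) : ℚ) * df l x (k+1) * df l y (n-k)
        = (n.choose (k+1) : ℚ) * df l x (k+1) * df l y ((n-(k+1))+1) := by
      intro k hk
      have hk' : k ≤ n := Nat.lt_succ_iff.mp (mem_range.mp hk)
      rcases Nat.lt_or_ge (k+1) (n+1) with h | h
      · have : n - k = (n - (k+1)) + 1 := by omega
        rw [this]
      · have : k = n := by omega
        subst this
        simp
    rw [Finset.sum_congr rfl hre]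
    rw [← Finset.sum_range_succ' (fun k => (n.choose k : ℚ) * df l x k * df l y ((n-k)+1)) (n+1)]
    rw [Finset.sum_range_succ (fun k => (n.choose k : ℚ) * df l x k * df l y ((n-k)+1)) (n+1)]
    simp [Nat.choose_succ_self]

lemma B_coeff (l x : ℚ) (n : ℕ) : (PowerSeries.coeff n) (B l x) = df l x n / n.factorial := by
  simp [B]

lemma B_mul (l x y : ℚ) : B l x * B l y = B l (x + y) := by
  ext n
  rw [PowerSeries.coeff_mul, Finset.Nat.sum_antidiagonal_eq_sum_range_succ_mk, B_coeff, df_add,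
    Finset.sum_div]
  refine Finset.sum_congr rfl fun k hk => ?_
  have hk' : k ≤ n := Nat.lt_succ_iff.mp (mem_range.mp hk)
  rw [B_coeff, B_coeff]
  have hfac : (n.choose k : ℚ) * (k.factorial : ℚ) * ((n-k).factorial : ℚ) = (n.factorial : ℚ) := by
    rw [← Nat.cast_mul, ← Nat.cast_mul, Nat.choose_mul_factorial_mul_factorial hk']
  have h1 : (k.factorial : ℚ) ≠ 0 := Nat.cast_ne_zero.mpr k.factorial_ne_zero
  have h2 : ((n-k).factorial : ℚ) ≠ 0 := Nat.cast_ne_zero.mpr (n-k).factorial_ne_zero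
  have h3 : (n.factorial : ℚ) ≠ 0 := Nat.cast_ne_zero.mpr n.factorial_ne_zero
  field_simp
  rw [← hfac]; ring

lemma B_pow (l : ℚ) (a : ℕ) : B l 1 ^ a = B l (a : ℚ) := by
  induction a with
  | zero => simp [B_zero]
  | succ a ih => rw [pow_succ, ih, B_mul]; push_cast; ring_nf

lemma rescale_B (l x : ℚ) (d : ℕ) (hd : d ≠ 0) :
    PowerSeries.rescale (d : ℚ) (B (l / d) x) = B l (d * x) := by
  have hdq : (d : ℚ) ≠ 0 := Nat.cast_ne_zero.mpr hd
  ext n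
  rw [PowerSeries.coeff_rescale, B_coeff, B_coeff]
  have : df l (d * x) n = (d : ℚ) ^ n * df (l / d) x n := by
    rw [df, df]
    rw [show ((d:ℚ))^n = ∏ _i ∈ Finset.range n, (d:ℚ) by
      rw [Finset.prod_const, Finset.card_range]]
    rw [← Finset.prod_mul_distrib]
    refine Finset.prod_congr rfl fun i _ => ?_
    field_simp
  rw [this]; ring

lemma const2 (l c : ℚ) : PowerSeries.constantCoeff (B l c + 1) = 2 := by
  rw [map_add, ← PowerSeries.coeff_zero_eq_constantCoeff, B_coeff]
  simp [df]; norm_num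

lemma Bc_ne (l c : ℚ) : B l c + 1 ≠ 0 := fun h => by
  have := const2 l c; rw [h] at this; simp at this

lemma key (l : ℚ) (d : ℕ) (hd0 : 0 < d) (hd : Odd d) (E F : ℕ → ℚ → ℚ)
    (hE : ∀ x : ℚ, (PowerSeries.mk fun n => E n x / n.factorial) * (B l 1 + 1)
      = 2 * B l x)
    (hF : ∀ x : ℚ, (PowerSeries.mk fun n => F n x / n.factorial) * (B (l / d) 1 + 1)
      = 2 * B (l / d) x) (m : ℕ) :
    E m 0 = (d : ℚ) ^ m * ∑ a ∈ Finset.range d, (-1 : ℚ) ^ a * F m ((a : ℚ) / d) := by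
  have hdq : (d : ℚ) ≠ 0 := Nat.cast_ne_zero.mpr hd0.ne'
  set X := B l 1 with hX
  have hG : ∀ a : ℕ,
      (PowerSeries.rescale (d : ℚ) (PowerSeries.mk fun n => F n ((a : ℚ)/d) / n.factorial))
        * (B l d + 1) = 2 * X ^ a := by
    intro a
    have h := congrArg (PowerSeries.rescale (d : ℚ)) (hF ((a : ℚ)/d))
    rw [map_mul, map_add, map_one, map_mul, map_ofNat, rescale_B l 1 d hd0.ne',
      rescale_B l ((a:ℚ)/d) d hd0.ne', mul_one, mul_div_cancel₀ _ hdq] at h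
    rw [h, B_pow]
  set G : PowerSeries ℚ := ∑ a ∈ Finset.range d,
    (-1 : ℚ)^a • (PowerSeries.rescale (d : ℚ) (PowerSeries.mk fun n => F n ((a : ℚ)/d) / n.factorial)) with hGdef
  have hGsum : G * (B l d + 1) = 2 * ∑ a ∈ Finset.range d, (-1 : ℚ)^a • X ^ a := by
    rw [hGdef, Finset.sum_mul, Finset.mul_sum]
    refine Finset.sum_congr rfl fun a _ => ?_
    rw [smul_mul_assoc, hG a, mul_smul_comm]
  have hterm : ∀ a : ℕ, (-1 : ℚ)^a • X ^ a = (-X)^a := by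
    intro a
    rw [PowerSeries.smul_eq_C_mul, map_pow, map_neg, map_one, neg_pow]
    ring
  have hg : (∑ a ∈ Finset.range d, (-1 : ℚ)^a • X ^ a) * (X + 1) = X ^ d + 1 := by
    simp only [hterm]
    have h := geom_sum_mul (-X) d
    rw [Odd.neg_pow hd] at h
    linear_combination -h
  have hXd : X ^ d = B l (d : ℚ) := B_pow l d
  have hne : (X + 1) * (B l (d:ℚ) + 1) ≠ 0 := mul_ne_zero (Bc_ne l 1) (Bc_ne l d)
  have h2 : (PowerSeries.mk fun n => E n 0 / n.factorial) * (X + 1) = 2 := by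
    rw [hE 0, B_zero, mul_one]
  have hEG : (PowerSeries.mk fun n => E n 0 / n.factorial) = G := by
    apply mul_right_cancel₀ hne
    calc (PowerSeries.mk fun n => E n 0 / n.factorial) * ((X + 1) * (B l (d:ℚ) + 1))
        = ((PowerSeries.mk fun n => E n 0 / n.factorial) * (X + 1)) * (B l (d:ℚ) + 1) := by ring
      _ = 2 * (B l (d:ℚ) + 1) := by rw [h2]
      _ = 2 * (X ^ d + 1) := by rw [hXd]
      _ = (2 * ∑ a ∈ Finset.range d, (-1 : ℚ)^a • X ^ a) * (X + 1) := by
          rw [mul_assoc, hg]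
      _ = (G * (B l (d:ℚ) + 1)) * (X + 1) := by rw [hGsum]
      _ = G * ((X + 1) * (B l (d:ℚ) + 1)) := by ring
  have hm := congrArg (PowerSeries.coeff m) hEG
  rw [hGdef, map_sum, PowerSeries.coeff_mk] at hm
  simp only [LinearMap.map_smul, PowerSeries.coeff_rescale, PowerSeries.coeff_mk,
    smul_eq_mul] at hm
  have hfac : (m.factorial : ℚ) ≠ 0 := Nat.cast_ne_zero.mpr m.factorial_ne_zero
  rw [Finset.mul_sum]
  rw [div_eq_iff hfac] at hm  -- hm : E m 0 = (∑ ...) * m!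
  rw [hm, Finset.sum_mul]
  refine Finset.sum_congr rfl fun a _ => ?_
  field_simp

/-- For odd `d ≥ 1`: `Ch_{n,λ} = Σ_{m≤n} dᵐ (Σ_{a<d} (-1)^a E_{m,λ/d}(a/d)) S₁(n,m)`,
where `E` (resp. `F`) are the degenerate Euler polynomials with parameter `λ` (resp. `λ/d`). -/
theorem stmt6 (l : ℚ) (d : ℕ) (hd0 : 0 < d) (hd : Odd d) (E F : ℕ → ℚ → ℚ)
    (hE : ∀ x : ℚ, (PowerSeries.mk fun n => E n x / n.factorial) * (B l 1 + 1)
      = 2 * B l x)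
    (hF : ∀ x : ℚ, (PowerSeries.mk fun n => F n x / n.factorial) * (B (l / d) 1 + 1)
      = 2 * B (l / d) x) :
    ∀ n : ℕ, Ch E n 0 =
      ∑ m ∈ Finset.range (n + 1),
        (d : ℚ) ^ m * (∑ a ∈ Finset.range d, (-1 : ℚ) ^ a * F m ((a : ℚ) / d)) * S1 n m := by
  intro n
  unfold Ch
  refine Finset.sum_congr rfl fun m _ => ?_
  rw [key l d hd0 hd E F hE hF m]
  ring
end

section
/- For all r ≥ 1 and n ≥ 0, the higher-order degenerate Changhee numbers of the second kind satisfy Ch^{(r)}_{n,λ} = Σ_{k=0}^{n} Σ_{m=0}^{k} (-1)^m · m! · C(r+m-1, m) · 2^{-m} · S_{2,λ}(k,m) · S₁(n,k). -/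
open Finset PowerSeries

lemma mulAgree (j : ℕ) (f g h : PowerSeries ℚ)
    (hgh : ∀ i ≤ j, PowerSeries.coeff i g = PowerSeries.coeff i h) :
    PowerSeries.coeff j (f * g) = PowerSeries.coeff j (f * h) := by
  rw [PowerSeries.coeff_mul, PowerSeries.coeff_mul]
  refine Finset.sum_congr rfl fun x hx => ?_
  rw [Finset.HasAntidiagonal.mem_antidiagonal] at hx
  rw [hgh x.2 (by omega)]

lemma PQ (r : ℕ) (hr : 1 ≤ r) :
    ((1 + X : PowerSeries ℚ) ^ r) *
      (PowerSeries.mk fun k => (-1 : ℚ) ^ k * ((r + k - 1).choose k : ℚ)) = 1 := by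
  have h0 := PowerSeries.mk_add_choose_mul_one_sub_pow_eq_one (S := ℚ) (d := r - 1)
  rw [Nat.sub_add_cancel hr] at h0
  have h1 := congrArg (PowerSeries.rescale (-1 : ℚ)) h0
  rw [map_mul, map_one, map_pow, map_sub, map_one, PowerSeries.rescale_X] at h1
  have hX : (1 : PowerSeries ℚ) - PowerSeries.C (-1 : ℚ) * X = 1 + X := by
    rw [map_neg, map_one]; ring
  have hmk : PowerSeries.rescale (-1 : ℚ)
        (PowerSeries.mk fun n => ((r - 1 + n).choose (r - 1) : ℚ))
      = PowerSeries.mk fun k => (-1 : ℚ) ^ k * ((r + k - 1).choose k : ℚ) := by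
    ext k
    rw [PowerSeries.coeff_rescale, PowerSeries.coeff_mk, PowerSeries.coeff_mk]
    congr 2
    rw [show r + k - 1 = r - 1 + k by omega,
      ← Nat.choose_symm (by omega : r - 1 ≤ r - 1 + k)]
    congr 1
    omega
  rw [hX, hmk] at h1
  rw [mul_comm]
  exact h1

lemma key_s13 (r n : ℕ) (hr : 1 ≤ r) (u : PowerSeries ℚ) (hu : (X : PowerSeries ℚ) ∣ u) :
    ∀ j ≤ n, PowerSeries.coeff j ((1 + u) ^ r *
        ∑ m ∈ Finset.range (n + 1),
          PowerSeries.C ((-1 : ℚ) ^ m * ((r + m - 1).choose m : ℚ)) * u ^ m)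
      = PowerSeries.coeff j (1 : PowerSeries ℚ) := by
  set c : ℕ → ℚ := fun m => (-1 : ℚ) ^ m * ((r + m - 1).choose m : ℚ) with hc
  set q : Polynomial ℚ := ∑ m ∈ Finset.range (n + 1), Polynomial.C (c m) * Polynomial.X ^ m
    with hqdef
  have hq : ∀ i ≤ n, q.coeff i = c i := by
    intro i hi
    rw [hqdef, Polynomial.finset_sum_coeff]
    simp only [Polynomial.coeff_C_mul, Polynomial.coeff_X_pow]
    rw [Finset.sum_eq_single i]
    · simp
    · intro b _ hb; simp [Ne.symm hb]
    · intro hmem; exact absurd (Finset.mem_range.2 (by omega)) hmem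
  have hdvd : (Polynomial.X : Polynomial ℚ) ^ (n + 1)
      ∣ ((1 + Polynomial.X) ^ r * q - 1) := by
    rw [Polynomial.X_pow_dvd_iff]
    intro d hd
    have hd' : d ≤ n := by omega
    have h1 : ((1 + Polynomial.X : Polynomial ℚ) ^ r * q).coeff d
        = (1 : Polynomial ℚ).coeff d := by
      have e1 : ((1 + Polynomial.X : Polynomial ℚ) ^ r * q).coeff d
          = PowerSeries.coeff d ((((1 + Polynomial.X : Polynomial ℚ) ^ r * q :
              Polynomial ℚ)) : PowerSeries ℚ) := (Polynomial.coeff_coe _ _).symm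
      rw [e1, Polynomial.coe_mul, Polynomial.coe_pow, Polynomial.coe_add, Polynomial.coe_one,
        Polynomial.coe_X]
      have e2 := mulAgree d ((1 + X : PowerSeries ℚ) ^ r) (q : PowerSeries ℚ)
        (PowerSeries.mk fun k => (-1 : ℚ) ^ k * ((r + k - 1).choose k : ℚ)) ?_
      · rw [e2, PQ r hr]
        simp [PowerSeries.coeff_one, Polynomial.coeff_one]
      · intro i hi
        rw [Polynomial.coeff_coe, hq i (by omega), PowerSeries.coeff_mk]
    rw [Polynomial.coeff_sub, h1, sub_self]
  obtain ⟨w, hw⟩ := hdvd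
  have haw := congrArg (Polynomial.aeval u) hw
  simp only [map_sub, map_mul, map_pow, map_add, map_one, Polynomial.aeval_X,
    Polynomial.aeval_C, map_sum] at haw
  have haq : Polynomial.aeval u q
      = ∑ m ∈ Finset.range (n + 1), PowerSeries.C (c m) * u ^ m := by
    rw [hqdef, map_sum]
    refine Finset.sum_congr rfl fun m _ => ?_
    rw [map_mul, map_pow, Polynomial.aeval_X, Polynomial.aeval_C,
      PowerSeries.algebraMap_apply, Algebra.algebraMap_self_apply]
  rw [haq] at haw
  intro j hj
  have hz : PowerSeries.coeff j (u ^ (n + 1) * Polynomial.aeval u w) = 0 := by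
    have : (X : PowerSeries ℚ) ^ (n + 1) ∣ u ^ (n + 1) * Polynomial.aeval u w :=
      dvd_mul_of_dvd_left (pow_dvd_pow_of_dvd hu _) _
    exact (PowerSeries.X_pow_dvd_iff.1 this) j (by omega)
  have := congrArg (PowerSeries.coeff j) haw
  rw [map_sub, hz] at this
  linarith [this]


/-- For `E⁽ʳ⁾` the order-r degenerate Euler numbers and `S2l` the degenerate Stirling
numbers of the second kind:
`Ch⁽ʳ⁾_{n,λ} = Σ_{k≤n} Σ_{m≤k} (-1)ᵐ m! C(r+m-1,m) 2⁻ᵐ S_{2,λ}(k,m) S₁(n,k)`,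
where `Ch⁽ʳ⁾_{n,λ} = Σ_{k≤n} S₁(n,k) E⁽ʳ⁾_{k,λ}`. -/
theorem stmt13 (l : ℚ) (r : ℕ) (hr : 1 ≤ r) (E : ℕ → ℚ) (S2l : ℕ → ℕ → ℚ)
    (hE : (PowerSeries.mk fun n => E n / n.factorial) * (B l 1 + 1) ^ r
      = 2 ^ r)
    (hS : ∀ m : ℕ, (B l 1 - 1) ^ m
      = (m.factorial : ℚ) • PowerSeries.mk fun n => S2l n m / n.factorial) :
    ∀ n : ℕ, (∑ k ∈ Finset.range (n + 1), S1 n k * E k)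
      = ∑ k ∈ Finset.range (n + 1), ∑ m ∈ Finset.range (k + 1),
          (-1 : ℚ) ^ m * m.factorial * ((r + m - 1).choose m : ℚ) * (2 : ℚ)⁻¹ ^ m *
            S2l k m * S1 n k := by
  set D : PowerSeries ℚ := B l 1 - 1 with hD
  have hD0 : PowerSeries.constantCoeff D = 0 := by
    rw [hD, map_sub, map_one]
    have : PowerSeries.constantCoeff (B l 1) = df l 1 0 / (Nat.factorial 0 : ℚ) := by
      rw [B, PowerSeries.constantCoeff_mk]
    rw [this]
    simp [df]
  have hXD : (X : PowerSeries ℚ) ∣ D := PowerSeries.X_dvd_iff.2 hD0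
  set u : PowerSeries ℚ := PowerSeries.C 2⁻¹ * D with hu
  have hXu : (X : PowerSeries ℚ) ∣ u := hXD.mul_left _
  have hDm : ∀ p m : ℕ, PowerSeries.coeff p (D ^ m)
      = (m.factorial : ℚ) * (S2l p m / p.factorial) := by
    intro p m
    rw [hD, hS m, map_smul, smul_eq_mul, PowerSeries.coeff_mk]
  have hDm0 : ∀ p m : ℕ, p < m → PowerSeries.coeff p (D ^ m) = 0 := by
    intro p m hpm
    exact PowerSeries.X_pow_dvd_iff.1 (pow_dvd_pow_of_dvd hXD m) p hpm
  set G : PowerSeries ℚ := PowerSeries.mk fun k =>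
    (∑ m ∈ Finset.range (k + 1),
      (-1 : ℚ) ^ m * m.factorial * ((r + m - 1).choose m : ℚ) * (2 : ℚ)⁻¹ ^ m * S2l k m)
      / k.factorial with hG
  have h21 : (2 : PowerSeries ℚ) * PowerSeries.C 2⁻¹ = 1 := by
    rw [show (2 : PowerSeries ℚ) = PowerSeries.C 2 from (map_ofNat (PowerSeries.C (R := ℚ)) 2).symm,
      ← map_mul]
    norm_num
  have h2D : ((2 : PowerSeries ℚ) + D) ^ r = (2 : PowerSeries ℚ) ^ r * (1 + u) ^ r := by
    rw [← mul_pow]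
    congr 1
    rw [hu, mul_add, mul_one, ← mul_assoc, h21, one_mul]
  have hGmul : G * (2 + D) ^ r = 2 ^ r := by
    ext j
    have hstep1 : PowerSeries.coeff j (G * (2 + D) ^ r)
        = PowerSeries.coeff j (((2 : PowerSeries ℚ) + D) ^ r *
            ∑ m ∈ Finset.range (j + 1),
              PowerSeries.C ((-1 : ℚ) ^ m * ((r + m - 1).choose m : ℚ)) * u ^ m) := by
      rw [mul_comm]
      refine mulAgree j _ _ _ fun i hi => ?_
      have hHn : ∀ i' : ℕ, i' ≤ j → PowerSeries.coeff i'
          (∑ m ∈ Finset.range (j + 1),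
            PowerSeries.C ((-1 : ℚ) ^ m * ((r + m - 1).choose m : ℚ)) * u ^ m)
          = ∑ m ∈ Finset.range (i' + 1),
              (-1 : ℚ) ^ m * ((r + m - 1).choose m : ℚ) * (2 : ℚ)⁻¹ ^ m *
                ((m.factorial : ℚ) * (S2l i' m / i'.factorial)) := by
        intro i' hi'
        rw [map_sum]
        have hterm : ∀ m : ℕ, PowerSeries.coeff i'
            (PowerSeries.C ((-1 : ℚ) ^ m * ((r + m - 1).choose m : ℚ)) * u ^ m)
            = (-1 : ℚ) ^ m * ((r + m - 1).choose m : ℚ) * (2 : ℚ)⁻¹ ^ m *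
                PowerSeries.coeff i' (D ^ m) := by
          intro m
          rw [hu, mul_pow, ← map_pow, ← mul_assoc, ← map_mul, PowerSeries.coeff_C_mul]
          try ring
        rw [Finset.sum_congr rfl fun m _ => hterm m]
        rw [← Finset.sum_subset (Finset.range_subset_range.2 (by omega : i' + 1 ≤ j + 1))]
        · exact Finset.sum_congr rfl fun m hm => by rw [hDm i' m]
        · intro m _ hm
          rw [hDm0 i' m (by simp only [Finset.mem_range, not_lt] at hm; omega), mul_zero]
      rw [hHn i hi, hG, PowerSeries.coeff_mk, Finset.sum_div]
      exact Finset.sum_congr rfl fun m _ => by ring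
    rw [hstep1, h2D, mul_assoc]
    have hC2r : (2 : PowerSeries ℚ) ^ r = PowerSeries.C (2 ^ r) := by
      rw [map_pow, map_ofNat]
    rw [hC2r, PowerSeries.coeff_C_mul, key_s13 r j hr u hXu j le_rfl, ← PowerSeries.coeff_C_mul,
      mul_one]
  have hBD : B l 1 + 1 = 2 + D := by rw [hD]; ring
  have hne : ((2 : PowerSeries ℚ) + D) ^ r ≠ 0 := by
    intro h
    have := congrArg (PowerSeries.constantCoeff) h
    rw [map_pow, map_add, map_ofNat, hD0, add_zero, map_zero] at this
    exact (pow_ne_zero r (two_ne_zero)) this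
  have hFG : (PowerSeries.mk fun n => E n / n.factorial) = G := by
    apply mul_right_cancel₀ hne
    rw [hGmul, ← hBD, hE]
  have hEc : ∀ k : ℕ, E k = ∑ m ∈ Finset.range (k + 1),
      (-1 : ℚ) ^ m * m.factorial * ((r + m - 1).choose m : ℚ) * (2 : ℚ)⁻¹ ^ m * S2l k m := by
    intro k
    have := congrArg (PowerSeries.coeff k) hFG
    rw [PowerSeries.coeff_mk, hG, PowerSeries.coeff_mk] at this
    have hk : (k.factorial : ℚ) ≠ 0 := Nat.cast_ne_zero.2 k.factorial_ne_zero
    have h2 : E k / k.factorial * k.factorial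
        = (∑ m ∈ Finset.range (k + 1),
            (-1 : ℚ) ^ m * m.factorial * ((r + m - 1).choose m : ℚ) * (2 : ℚ)⁻¹ ^ m * S2l k m)
          / k.factorial * k.factorial := by rw [this]
    rwa [div_mul_cancel₀ _ hk, div_mul_cancel₀ _ hk] at h2
  intro n
  refine Finset.sum_congr rfl fun k _ => ?_
  rw [hEc k, Finset.mul_sum]
  exact Finset.sum_congr rfl fun m _ => by ring
end

section
/- For all r ≥ 1 and n ≥ 0, the order-r degenerate Euler numbers satisfy E^{(r)}_{n,λ} = Σ_{m=0}^{n} (-1)^m · m! · C(r+m-1, m) · 2^{-m} · S_{2,λ}(n,m). -/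
open Finset PowerSeries

namespace Stmt14Aux

noncomputable def a (r m : ℕ) : ℚ :=
  (-1 : ℚ) ^ m * ((r + m - 1).choose m : ℚ) * (2 : ℚ)⁻¹ ^ m

lemma a_zero (r : ℕ) : a r 0 = 1 := by simp [a]

lemma a_zero_succ (m : ℕ) : a 0 (m + 1) = 0 := by
  have : (0 + (m + 1) - 1).choose (m + 1) = 0 := by
    have : 0 + (m + 1) - 1 = m := by omega
    rw [this]; exact Nat.choose_eq_zero_of_lt (by omega)
  simp [a, this]

lemma a_rec (r m : ℕ) : 2 * a (r + 1) (m + 1) + a (r + 1) m = 2 * a r (m + 1) := by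
  have h1 : (r + 1) + (m + 1) - 1 = (r + m) + 1 := by omega
  have h2 : (r + 1) + m - 1 = r + m := by omega
  have h3 : r + (m + 1) - 1 = r + m := by omega
  rw [a, a, a, h1, h2, h3, Nat.choose_succ_succ']
  push_cast
  ring

lemma coeff_pow_eq_zero {f : PowerSeries ℚ} (hf : constantCoeff (R := ℚ) f = 0) {k m : ℕ}
    (h : k < m) : PowerSeries.coeff k (f ^ m) = 0 := by
  have : (X : PowerSeries ℚ) ^ m ∣ f ^ m :=
    pow_dvd_pow_of_dvd (PowerSeries.X_dvd_iff.mpr hf) m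
  exact (PowerSeries.X_pow_dvd_iff.mp this) k h

lemma coeff_mul_congr {φ φ' ψ : PowerSeries ℚ} {n : ℕ}
    (h : ∀ k ≤ n, PowerSeries.coeff k φ = PowerSeries.coeff k φ') :
    PowerSeries.coeff n (φ * ψ) = PowerSeries.coeff n (φ' * ψ) := by
  rw [PowerSeries.coeff_mul, PowerSeries.coeff_mul]
  refine Finset.sum_congr rfl fun p hp => ?_
  rw [Finset.HasAntidiagonal.mem_antidiagonal] at hp
  rw [h p.1 (by omega)]

lemma step (f : PowerSeries ℚ) (b c : ℕ → ℚ) (h0 : b 0 = c 0)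
    (hrec : ∀ m, 2 * b (m + 1) + b m = 2 * c (m + 1)) (n : ℕ) :
    (∑ m ∈ range (n + 1), PowerSeries.C (b m) * f ^ m) * (2 + f)
      = 2 * (∑ m ∈ range (n + 1), PowerSeries.C (c m) * f ^ m)
        + PowerSeries.C (b n) * f ^ (n + 1) := by
  have expand : (∑ m ∈ range (n + 1), PowerSeries.C (b m) * f ^ m) * (2 + f)
      = ∑ m ∈ range (n + 1), (2 * (PowerSeries.C (b m) * f ^ m)
          + PowerSeries.C (b m) * f ^ (m + 1)) := by
    rw [Finset.sum_mul]
    refine Finset.sum_congr rfl fun m _ => ?_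
    ring
  rw [expand, Finset.sum_add_distrib,
    Finset.sum_range_succ' (fun m => 2 * (PowerSeries.C (b m) * f ^ m)),
    Finset.sum_range_succ (fun m => PowerSeries.C (b m) * f ^ (m + 1)),
    Finset.mul_sum,
    Finset.sum_range_succ' (fun m => 2 * (PowerSeries.C (c m) * f ^ m))]
  have hterm : ∀ m, 2 * (PowerSeries.C (b (m + 1)) * f ^ (m + 1))
      + PowerSeries.C (b m) * f ^ (m + 1)
      = 2 * (PowerSeries.C (c (m + 1)) * f ^ (m + 1)) := by
    intro m
    have hc : PowerSeries.C (2 * b (m + 1) + b m) = PowerSeries.C (2 * c (m + 1)) := by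
      rw [hrec m]
    have e1 : (2 : PowerSeries ℚ) = PowerSeries.C 2 := (map_ofNat (PowerSeries.C (R := ℚ)) 2).symm
    calc 2 * (PowerSeries.C (b (m + 1)) * f ^ (m + 1))
          + PowerSeries.C (b m) * f ^ (m + 1)
        = PowerSeries.C (2 * b (m + 1) + b m) * f ^ (m + 1) := by
          rw [map_add, map_mul, e1]; ring
      _ = PowerSeries.C (2 * c (m + 1)) * f ^ (m + 1) := by rw [hc]
      _ = 2 * (PowerSeries.C (c (m + 1)) * f ^ (m + 1)) := by
          rw [map_mul, e1]; ring
  have hsum : (∑ m ∈ range n, 2 * (PowerSeries.C (b (m + 1)) * f ^ (m + 1)))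
      + ∑ m ∈ range n, PowerSeries.C (b m) * f ^ (m + 1)
      = ∑ m ∈ range n, 2 * (PowerSeries.C (c (m + 1)) * f ^ (m + 1)) := by
    rw [← Finset.sum_add_distrib]
    exact Finset.sum_congr rfl fun m _ => hterm m
  rw [h0]
  linear_combination hsum

lemma key (f : PowerSeries ℚ) (hf : constantCoeff (R := ℚ) f = 0) (r n : ℕ) :
    (X : PowerSeries ℚ) ^ (n + 1) ∣
      (∑ m ∈ range (n + 1), PowerSeries.C (a r m) * f ^ m) * (2 + f) ^ r - 2 ^ r := by
  induction r with
  | zero =>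
      have : (∑ m ∈ range (n + 1), PowerSeries.C (a 0 m) * f ^ m) = 1 := by
        rw [Finset.sum_range_succ']
        simp [a_zero, a_zero_succ]
      rw [this]
      simp
  | succ r ih =>
      have hstep := step f (a (r + 1)) (a r) (by rw [a_zero, a_zero]) (a_rec r) n
      have e : (∑ m ∈ range (n + 1), PowerSeries.C (a (r + 1) m) * f ^ m) * (2 + f) ^ (r + 1)
          = 2 * ((∑ m ∈ range (n + 1), PowerSeries.C (a r m) * f ^ m) * (2 + f) ^ r - 2 ^ r)
            + PowerSeries.C (a (r + 1) n) * f ^ (n + 1) * (2 + f) ^ r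
            + 2 ^ (r + 1) := by
        rw [pow_succ', ← mul_assoc, hstep]
        ring
      rw [e, add_sub_cancel_right]
      have h1 : (X : PowerSeries ℚ) ^ (n + 1) ∣
          2 * ((∑ m ∈ range (n + 1), PowerSeries.C (a r m) * f ^ m) * (2 + f) ^ r - 2 ^ r) :=
        Dvd.dvd.mul_left ih 2
      have h2 : (X : PowerSeries ℚ) ^ (n + 1) ∣
          PowerSeries.C (a (r + 1) n) * f ^ (n + 1) * (2 + f) ^ r := by
        have hd : (X : PowerSeries ℚ) ^ (n + 1) ∣ f ^ (n + 1) :=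
          pow_dvd_pow_of_dvd (PowerSeries.X_dvd_iff.mpr hf) _
        exact (hd.mul_left _).mul_right _
      exact dvd_add h1 h2

end Stmt14Aux

/-- For `E⁽ʳ⁾` the order-r degenerate Euler numbers:
`E⁽ʳ⁾_{n,λ} = Σ_{m≤n} (-1)ᵐ m! C(r+m-1,m) 2⁻ᵐ S_{2,λ}(n,m)`. -/
theorem stmt14 (l : ℚ) (r : ℕ) (hr : 1 ≤ r) (E : ℕ → ℚ) (S2l : ℕ → ℕ → ℚ)
    (hE : (PowerSeries.mk fun n => E n / n.factorial) * (B l 1 + 1) ^ r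
      = 2 ^ r)
    (hS : ∀ m : ℕ, (B l 1 - 1) ^ m
      = (m.factorial : ℚ) • PowerSeries.mk fun n => S2l n m / n.factorial) :
    ∀ n : ℕ, E n = ∑ m ∈ Finset.range (n + 1),
      (-1 : ℚ) ^ m * m.factorial * ((r + m - 1).choose m : ℚ) * (2 : ℚ)⁻¹ ^ m *
        S2l n m := by
  classical
  set f : PowerSeries ℚ := B l 1 - 1 with hf
  have hf0 : constantCoeff (R := ℚ) f = 0 := by
    rw [hf, map_sub, B]
    simp [df]
  have hBf : B l 1 + 1 = 2 + f := by rw [hf]; ring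
  rw [hBf] at hE
  -- the candidate series
  set G : PowerSeries ℚ :=
    PowerSeries.mk (fun k => ∑ m ∈ Finset.range (k + 1),
      Stmt14Aux.a r m * PowerSeries.coeff k (f ^ m)) with hGdef
  have hG : G * (2 + f) ^ r = 2 ^ r := by
    ext N
    have hagree : ∀ k ≤ N, PowerSeries.coeff k G
        = PowerSeries.coeff k (∑ m ∈ Finset.range (N + 1),
            PowerSeries.C (Stmt14Aux.a r m) * f ^ m) := by
      intro k hk
      rw [hGdef, PowerSeries.coeff_mk, map_sum]
      simp_rw [PowerSeries.coeff_C_mul]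
      refine Finset.sum_subset (Finset.range_subset_range.mpr (by omega)) ?_
      intro m hm hm'
      rw [Finset.mem_range] at hm'
      rw [Stmt14Aux.coeff_pow_eq_zero hf0 (by omega), mul_zero]
    rw [Stmt14Aux.coeff_mul_congr hagree]
    obtain ⟨q, hq⟩ := Stmt14Aux.key f hf0 r N
    have : (∑ m ∈ Finset.range (N + 1), PowerSeries.C (Stmt14Aux.a r m) * f ^ m)
        * (2 + f) ^ r = 2 ^ r + X ^ (N + 1) * q := by
      rw [← hq]; ring
    rw [this, map_add]
    have : PowerSeries.coeff N ((X : PowerSeries ℚ) ^ (N + 1) * q) = 0 :=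
      PowerSeries.X_pow_dvd_iff.mp (Dvd.intro q rfl) N (by omega)
    rw [this, add_zero]
  -- cancel (2+f)^r
  have hWne : ((2 : PowerSeries ℚ) + f) ^ r ≠ 0 := by
    intro h
    have := congrArg (constantCoeff (R := ℚ)) h
    rw [map_pow, map_add, hf0, map_ofNat] at this
    simp at this
  have hFG : (PowerSeries.mk fun n => E n / n.factorial) = G :=
    mul_right_cancel₀ hWne (hE.trans hG.symm)
  intro n
  have hcoeff := congrArg (PowerSeries.coeff n) hFG
  rw [PowerSeries.coeff_mk, hGdef, PowerSeries.coeff_mk] at hcoeff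
  have hfact : (n.factorial : ℚ) ≠ 0 := by exact_mod_cast n.factorial_ne_zero
  have hterm : ∀ m, PowerSeries.coeff n (f ^ m)
      = (m.factorial : ℚ) * (S2l n m / n.factorial) := by
    intro m
    rw [hf, hS m, PowerSeries.coeff_smul, PowerSeries.coeff_mk, smul_eq_mul]
  have : E n / n.factorial = ∑ m ∈ Finset.range (n + 1),
      Stmt14Aux.a r m * ((m.factorial : ℚ) * (S2l n m / n.factorial)) := by
    rw [hcoeff]
    exact Finset.sum_congr rfl fun m _ => by rw [hterm m]
  have hEn : E n = ∑ m ∈ Finset.range (n + 1),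
      Stmt14Aux.a r m * (m.factorial : ℚ) * S2l n m := by
    have := congrArg (fun x => (n.factorial : ℚ) * x) this
    simp only [Finset.mul_sum] at this
    rw [mul_div_cancel₀ _ hfact] at this
    rw [this]
    refine Finset.sum_congr rfl fun m _ => ?_
    field_simp
  rw [hEn]
  refine Finset.sum_congr rfl fun m _ => ?_
  rw [Stmt14Aux.a]
  ring
end

section
/- For all 0 ≤ k ≤ r and n ≥ 0, the higher-order degenerate Changhee polynomials of the second kind satisfy the convolution identity Ch^{(r)}_{n,λ}(x) = Σ_{l=0}^{n} C(n,l) · Ch^{(k)}_{l,λ} · Ch^{(r-k)}_{n-l,λ}(x), where Ch^{(k)}_{l,λ} = Ch^{(k)}_{l,λ}(0). -/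
open Finset PowerSeries

/-- `P m = (log(1+t))^m / m!` as an EGF-normalized power series. -/
noncomputable def ChP (m : ℕ) : PowerSeries ℚ :=
  PowerSeries.mk fun n => S1 n m * m.factorial / n.factorial

lemma ChP_zero : ChP 0 = 1 := by
  ext n
  cases n with
  | zero => simp [ChP, S1]
  | succ n => simp [ChP, S1, coeff_one]

lemma constantCoeff_ChP_succ (m : ℕ) : constantCoeff (ChP (m+1)) = 0 := by
  simp [ChP, constantCoeff_mk, S1]

/-- The defining ODE `(1+t) (d/dt) P_{m+1} = (m+1) P_m`, encoding the Stirling recurrence. -/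
lemma ChP_ode (m : ℕ) :
    (1 + X) * (d⁄dX ℚ (ChP (m+1))) = ((m : ℚ) + 1) • ChP m := by
  ext n
  rw [add_mul, one_mul, map_add]
  cases n with
  | zero =>
      simp only [coeff_zero_eq_constantCoeff, map_mul, constantCoeff_X, zero_mul, add_zero]
      rw [← coeff_zero_eq_constantCoeff, coeff_derivative]
      simp [ChP, S1, Nat.factorial_succ, map_smul]
      ring
  | succ n =>
      rw [coeff_succ_X_mul, coeff_derivative, coeff_derivative, map_smul]
      simp only [ChP, coeff_mk, smul_eq_mul]
      have h1 : S1 (n+2) (m+1) = S1 (n+1) m - ((n:ℚ)+1) * S1 (n+1) (m+1) := by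
        show S1 ((n+1)+1) (m+1) = _
        rw [S1]; push_cast; ring
      rw [h1]
      have hf1 : ((n+1).factorial : ℚ) ≠ 0 := by positivity
      have hf2 : ((n+2).factorial : ℚ) ≠ 0 := by positivity
      have hf3 : ((n).factorial : ℚ) ≠ 0 := by positivity
      rw [Nat.factorial_succ (n+1), Nat.factorial_succ n, Nat.factorial_succ m]
      push_cast
      field_simp
      ring

lemma ext_of_deriv {f g : PowerSeries ℚ} (h : d⁄dX ℚ f = d⁄dX ℚ g)
    (h0 : constantCoeff f = constantCoeff g) : f = g := by
  ext n
  cases n with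
  | zero => simpa using h0
  | succ n =>
      have := congrArg (fun s => coeff n s) h
      simp only [coeff_derivative] at this
      have hn : ((n:ℚ)+1) ≠ 0 := by positivity
      field_simp at this
      exact this

lemma one_add_X_ne : (1 + X : PowerSeries ℚ) ≠ 0 := by
  intro h
  have := congrArg (constantCoeff) h
  simp at this

lemma ChP_succ (m : ℕ) : ChP (m+1) = ChP m * ChP 1 := by
  induction m with
  | zero => rw [ChP_zero, one_mul]
  | succ m ih =>
      apply ext_of_deriv
      · apply mul_left_cancel₀ one_add_X_ne
        rw [ChP_ode]
        have leib : d⁄dX ℚ (ChP (m+1) * ChP 1)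
            = ChP (m+1) • (d⁄dX ℚ (ChP 1)) + ChP 1 • (d⁄dX ℚ (ChP (m+1))) :=
          Derivation.leibniz _ _ _
        rw [leib, smul_eq_mul, smul_eq_mul, mul_add]
        have h1 : (1 + X) * (ChP (m+1) * d⁄dX ℚ (ChP 1))
            = ChP (m+1) * ((1+X) * d⁄dX ℚ (ChP 1)) := by ring
        have h2 : (1 + X) * (ChP 1 * d⁄dX ℚ (ChP (m+1)))
            = ChP 1 * ((1+X) * d⁄dX ℚ (ChP (m+1))) := by ring
        rw [h1, h2, ChP_ode 0, ChP_ode m, ChP_zero, ih]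
        rw [show (((m+1:ℕ):ℚ)+1) = (((0:ℕ):ℚ)+1) + ((m:ℚ)+1) by push_cast; ring]
        simp only [add_smul]
        simp only [smul_eq_C_mul, map_add, map_one]
        push_cast
        ring
      · rw [constantCoeff_ChP_succ, map_mul, constantCoeff_ChP_succ, zero_mul]

lemma ChP_eq_pow (m : ℕ) : ChP m = ChP 1 ^ m := by
  induction m with
  | zero => rw [ChP_zero, pow_zero]
  | succ m ih => rw [ChP_succ, ih, pow_succ]

lemma coeff_ChP (n m : ℕ) : coeff n (ChP 1 ^ m) = S1 n m * m.factorial / n.factorial := by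
  rw [← ChP_eq_pow]; simp [ChP]

lemma coeff_ChP_eq_zero {n m : ℕ} (h : n < m) : coeff n (ChP 1 ^ m) = 0 := by
  have hX : (X : PowerSeries ℚ) ∣ ChP 1 := X_dvd_iff.mpr (by simp [ChP, constantCoeff_mk, S1])
  exact X_pow_dvd_iff.mp (pow_dvd_pow_of_dvd hX m) n h

lemma coeff_comb (c : ℕ → ℚ) (p N : ℕ) (h : p ≤ N) :
    coeff p (∑ i ∈ Finset.range (N+1), C (c i / i.factorial) * ChP 1 ^ i)
      = (∑ m ∈ Finset.range (p+1), S1 p m * c m) / p.factorial := by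
  rw [map_sum,
    ← Finset.sum_subset (Finset.range_subset_range.mpr (by omega) :
      Finset.range (p+1) ⊆ Finset.range (N+1))]
  · rw [Finset.sum_div]
    apply Finset.sum_congr rfl
    intro i _
    rw [coeff_C_mul, coeff_ChP]
    have h1 : (i.factorial:ℚ) ≠ 0 := by positivity
    have h2 : (p.factorial:ℚ) ≠ 0 := by positivity
    field_simp
  · intro i _ hi
    rw [coeff_C_mul, coeff_ChP_eq_zero (by simp only [Finset.mem_range] at hi; omega), mul_zero]

lemma U_ne (l : ℚ) : (B l 1 + 1 : PowerSeries ℚ) ≠ 0 := by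
  intro h
  have h2 := congrArg (constantCoeff) h
  simp [B, df, constantCoeff_mk] at h2

lemma Emul (l : ℚ) (E : ℕ → ℕ → ℚ → ℚ)
    (hE : ∀ (r : ℕ) (x : ℚ),
      (PowerSeries.mk fun n => E r n x / n.factorial) * (B l 1 + 1) ^ r
        = 2 ^ r * B l x)
    (k r : ℕ) (hk : k ≤ r) (x : ℚ) :
    (PowerSeries.mk fun n => E r n x / n.factorial)
      = (PowerSeries.mk fun n => E k n 0 / n.factorial)
        * (PowerSeries.mk fun n => E (r-k) n x / n.factorial) := by
  have hkr : k + (r - k) = r := Nat.add_sub_cancel' hk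
  apply mul_right_cancel₀ (pow_ne_zero r (U_ne l))
  rw [hE r x]
  have h4 : ((PowerSeries.mk fun n => E k n 0 / n.factorial)
        * (PowerSeries.mk fun n => E (r-k) n x / n.factorial)) * (B l 1 + 1) ^ r
      = ((PowerSeries.mk fun n => E k n 0 / n.factorial) * (B l 1 + 1) ^ k)
        * ((PowerSeries.mk fun n => E (r-k) n x / n.factorial) * (B l 1 + 1) ^ (r-k)) := by
    rw [show ((B l 1 + 1 : PowerSeries ℚ)) ^ r = (B l 1 + 1) ^ k * (B l 1 + 1) ^ (r-k) by
      rw [← pow_add, hkr]]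
    ring
  rw [h4, hE k 0, hE (r-k) x, B_zero, mul_one]
  rw [show ((2:PowerSeries ℚ))^k * (2^(r-k) * B l x) = (2^k * 2^(r-k)) * B l x by ring,
    ← pow_add, hkr]

/-- Convolution identity for higher-order degenerate Changhee polynomials of the second
kind: for `0 ≤ k ≤ r`, `Ch⁽ʳ⁾_{n,λ}(x) = Σ_{l≤n} C(n,l) Ch⁽ᵏ⁾_{l,λ} Ch⁽ʳ⁻ᵏ⁾_{n-l,λ}(x)`.
Here `E r n x` are the order-r degenerate Euler polynomials (for all orders `r ≥ 0`, with
`E⁽⁰⁾_{n,λ}(x) = (x)_{n,λ}`), and `Ch⁽ʳ⁾_{n,λ}(x) = Σ_{m≤n} S₁(n,m) E⁽ʳ⁾_{m,λ}(x)`. -/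
theorem stmt15 (l : ℚ) (E : ℕ → ℕ → ℚ → ℚ)
    (hE : ∀ (r : ℕ) (x : ℚ),
      (PowerSeries.mk fun n => E r n x / n.factorial) * (B l 1 + 1) ^ r
        = 2 ^ r * B l x) :
    ∀ k r : ℕ, k ≤ r → ∀ (n : ℕ) (x : ℚ),
      (∑ m ∈ Finset.range (n + 1), S1 n m * E r m x)
        = ∑ j ∈ Finset.range (n + 1), (n.choose j : ℚ) *
            (∑ m ∈ Finset.range (j + 1), S1 j m * E k m 0) *
            (∑ m ∈ Finset.range (n - j + 1), S1 (n - j) m * E (r - k) m x) := by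
  intro k r hk n x
  have hErm : ∀ m : ℕ, E r m x / m.factorial
      = ∑ pq ∈ Finset.HasAntidiagonal.antidiagonal m,
          (E k pq.1 0 / pq.1.factorial) * (E (r-k) pq.2 x / pq.2.factorial) := by
    intro m
    have h := congrArg (fun s => coeff m s) (Emul l E hE k r hk x)
    simpa [coeff_mul] using h
  -- abbreviations
  set g : ℕ × ℕ → ℚ := fun pq => (E k pq.1 0 / pq.1.factorial)
      * (E (r-k) pq.2 x / pq.2.factorial) * coeff n (ChP 1 ^ (pq.1 + pq.2)) with hg
  set A : PowerSeries ℚ :=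
    ∑ i ∈ Finset.range (n+1), C (E k i 0 / i.factorial) * ChP 1 ^ i with hA
  set Bq : PowerSeries ℚ :=
    ∑ i ∈ Finset.range (n+1), C (E (r-k) i x / i.factorial) * ChP 1 ^ i with hBq
  have hfn : (n.factorial : ℚ) ≠ 0 := by positivity
  -- Step 1 : the LHS as a coefficient
  have hL : (∑ m ∈ Finset.range (n + 1), S1 n m * E r m x)
      = n.factorial * coeff n
          (∑ m ∈ Finset.range (n+1), C (E r m x / m.factorial) * ChP 1 ^ m) := by
    rw [coeff_comb (fun m => E r m x) n n le_rfl]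
    field_simp
  -- Step 2 : the coefficient equals `coeff n (A * Bq)`
  have hkey : coeff n (∑ m ∈ Finset.range (n+1), C (E r m x / m.factorial) * ChP 1 ^ m)
      = coeff n (A * Bq) := by
    have hleft : coeff n (∑ m ∈ Finset.range (n+1), C (E r m x / m.factorial) * ChP 1 ^ m)
        = ∑ m ∈ Finset.range (n+1), ∑ pq ∈ Finset.HasAntidiagonal.antidiagonal m, g pq := by
      rw [map_sum]
      apply Finset.sum_congr rfl
      intro m _
      rw [coeff_C_mul, hErm m, Finset.sum_mul]
      apply Finset.sum_congr rfl
      intro pq hpq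
      have hm : pq.1 + pq.2 = m := Finset.HasAntidiagonal.mem_antidiagonal.mp hpq
      rw [hg, ← hm]
    have hright : coeff n (A * Bq)
        = ∑ pq ∈ Finset.range (n+1) ×ˢ Finset.range (n+1), g pq := by
      rw [hA, hBq, Finset.sum_mul_sum, Finset.sum_product]
      rw [map_sum]
      apply Finset.sum_congr rfl
      intro i _
      rw [map_sum]
      apply Finset.sum_congr rfl
      intro j _
      have : (C (E k i 0 / i.factorial) * ChP 1 ^ i)
            * (C (E (r-k) j x / j.factorial) * ChP 1 ^ j)
          = C (E k i 0 / i.factorial) * (C (E (r-k) j x / j.factorial)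
            * ChP 1 ^ (i + j)) := by
        rw [pow_add]; ring
      rw [this, coeff_C_mul, coeff_C_mul, hg]
      ring
    rw [hleft, hright]
    have hdisj : (↑(Finset.range (n+1)) : Set ℕ).PairwiseDisjoint
        (fun m => (Finset.HasAntidiagonal.antidiagonal m : Finset (ℕ × ℕ))) := by
      intro a _ b _ hab
      simp only [Function.onFun, Finset.disjoint_left]
      intro pq h1 h2
      rw [Finset.HasAntidiagonal.mem_antidiagonal] at h1 h2
      exact hab (h1 ▸ h2)
    rw [← Finset.sum_biUnion hdisj]
    apply Finset.sum_subset
    · intro pq hpq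
      rw [Finset.mem_biUnion] at hpq
      obtain ⟨m, hm, hpq⟩ := hpq
      rw [Finset.HasAntidiagonal.mem_antidiagonal] at hpq
      rw [Finset.mem_range] at hm
      rw [Finset.mem_product, Finset.mem_range, Finset.mem_range]
      omega
    · intro pq _ hT
      have hlt : n < pq.1 + pq.2 := by
        by_contra hcon
        push_neg at hcon
        exact hT (Finset.mem_biUnion.mpr ⟨pq.1 + pq.2, Finset.mem_range.mpr (by omega),
          Finset.HasAntidiagonal.mem_antidiagonal.mpr rfl⟩)
      rw [hg]
      simp only
      rw [coeff_ChP_eq_zero hlt, mul_zero]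
  -- Step 3 : expand `coeff n (A * Bq)` and finish
  rw [hL, hkey, coeff_mul, Finset.Nat.sum_antidiagonal_eq_sum_range_succ_mk, Finset.mul_sum]
  apply Finset.sum_congr rfl
  intro j hj
  have hj' : j ≤ n := Nat.lt_succ_iff.mp (Finset.mem_range.mp hj)
  rw [hA, hBq, coeff_comb (fun m => E k m 0) j n hj',
    coeff_comb (fun m => E (r-k) m x) (n-j) n (Nat.sub_le n j)]
  set u := ∑ m ∈ Finset.range (j+1), S1 j m * E k m 0 with hu
  set v := ∑ m ∈ Finset.range (n-j+1), S1 (n-j) m * E (r-k) m x with hv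
  have hcf : ((n.choose j : ℚ)) * j.factorial * (n-j).factorial = n.factorial := by
    exact_mod_cast congrArg (Nat.cast : ℕ → ℚ) (Nat.choose_mul_factorial_mul_factorial hj')
  have h1 : (j.factorial : ℚ) ≠ 0 := by positivity
  have h2 : ((n-j).factorial : ℚ) ≠ 0 := by positivity
  have hch : (n.choose j : ℚ) = n.factorial / (j.factorial * (n-j).factorial) := by
    rw [eq_div_iff (by positivity)]
    linear_combination hcf
  rw [hch]
  ring
end
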